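/- If B is a c.c.c. Boolean algebra, then there is a generalized Galois-Tukey connection from the reaping relation of ωB/Fin to the sequential composition Part*(B) ; R(P(ω)/fin). Consequently 𝔯(ωB/Fin) ≤ 𝔡(Part*(B)) · 𝔯 and min{𝔟(Part*(B)), 𝔰} ≤ 𝔰(ωB/Fin). -/

import Mathlib

/-- A relational system `⟨A₋, A, A₊⟩`. -/
structure RelSys : Type 1 where
  Dom : Type
  Cod : Type
  Rel : Dom → Cod → Prop

/-- The dominating number `𝔡(A)` of a relational system. -/
noncomputable def dNum (S : RelSys) : Cardinal :=
  sInf { c | ∃ Y : Set S.Cod, Cardinal.mk Y = c ∧ ∀ x : S.Dom, ∃ y ∈ Y, S.Rel x y }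

/-- The bounding number `𝔟(A)` of a relational system. -/
noncomputable def bNum (S : RelSys) : Cardinal :=
  sInf { c | ∃ X : Set S.Dom, Cardinal.mk X = c ∧ ∀ y : S.Cod, ∃ x ∈ X, ¬ S.Rel x y }

/-- A generalized Galois–Tukey connection from `S` to `T` (`S ≤_T T`). -/
def GT (S T : RelSys) : Prop :=
  ∃ (φm : S.Dom → T.Dom) (φp : T.Cod → S.Cod),
    ∀ a b, T.Rel (φm a) b → S.Rel a (φp b)

/-- Galois–Tukey equivalence. -/
def GTequiv (S T : RelSys) : Prop := GT S T ∧ GT T S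

/-- The σ-version `A^σ` of a relational system. -/
def sigmaSys (S : RelSys) : RelSys :=
  ⟨S.Dom, ℕ → S.Cod, fun a f => ∃ n, S.Rel a (f n)⟩

/-- Sequential composition `A;B` of relational systems. -/
def seqComp (S T : RelSys) : RelSys :=
  ⟨S.Dom × (S.Cod → T.Dom), S.Cod × T.Cod,
   fun p q => S.Rel p.1 q.1 ∧ T.Rel (p.2 q.1) q.2⟩

/-- An antichain in a Boolean algebra: pairwise disjoint nonzero elements. -/
def BAAntichain {α : Type} [BooleanAlgebra α] (A : Set α) : Prop :=
  (∀ a ∈ A, a ≠ ⊥) ∧ ∀ a ∈ A, ∀ b ∈ A, a ≠ b → a ⊓ b = ⊥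

/-- A maximal antichain in a Boolean algebra. -/
def MaxAC {α : Type} [BooleanAlgebra α] (A : Set α) : Prop :=
  BAAntichain A ∧ ∀ b : α, b ≠ ⊥ → ∃ a ∈ A, a ⊓ b ≠ ⊥

/-- The countable chain condition. -/
def CCC (α : Type) [BooleanAlgebra α] : Prop :=
  ∀ A : Set α, BAAntichain A → A.Countable

/-- `C` refines `A` (written `A ≤ C`): every element of `C` is below some element of `A`. -/
def Refines {α : Type} [BooleanAlgebra α] (A C : Set α) : Prop :=
  ∀ c ∈ C, ∃ a ∈ A, c ≤ a

/-- `C` almost refines `A` (written `A ≤* C`). -/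
def AlmostRefines {α : Type} [BooleanAlgebra α] (A C : Set α) : Prop :=
  ∃ F : Finset α, ↑F ⊆ A ∧ Refines ((A \ ↑F) ∪ {F.sup id}) C

/-- The set of maximal antichains of `α`. -/
def PartT (α : Type) [BooleanAlgebra α] : Type := {A : Set α // MaxAC A}

/-- The refinement relational system `Part(α)`. -/
def PartSys (α : Type) [BooleanAlgebra α] : RelSys :=
  ⟨PartT α, PartT α, fun A C => Refines A.1 C.1⟩

/-- The almost-refinement relational system `Part*(α)`. -/
def PartStar (α : Type) [BooleanAlgebra α] : RelSys :=
  ⟨PartT α, PartT α, fun A C => AlmostRefines A.1 C.1⟩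

/-- The eventual domination relational system `(ωω, ≤*, ωω)`. -/
def domSys : RelSys :=
  ⟨ℕ → ℕ, ℕ → ℕ, fun f g => ∀ᶠ n in Filter.atTop, f n ≤ g n⟩

/-- Quotients of Boolean rings are Boolean rings. -/
instance quotBooleanRing (R : Type) [BooleanRing R] (I : Ideal R) :
    BooleanRing (R ⧸ I) :=
  { (inferInstance : CommRing (R ⧸ I)) with
    isIdempotentElem := fun a => by
      obtain ⟨x, rfl⟩ := Ideal.Quotient.mk_surjective a
      show _ * _ = _
      rw [← map_mul, BooleanRing.mul_self] }

/-- The quotient of a Boolean algebra by an ideal (presented as a ring ideal of the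
associated Boolean ring), again viewed as a Boolean algebra. -/
def quotAlg (α : Type) [BooleanAlgebra α] (I : Ideal (AsBoolRing α)) : Type :=
  AsBoolAlg (AsBoolRing α ⧸ I)

noncomputable instance quotAlgBA (α : Type) [BooleanAlgebra α] (I : Ideal (AsBoolRing α)) :
    BooleanAlgebra (quotAlg α I) :=
  inferInstanceAs (BooleanAlgebra (AsBoolAlg (AsBoolRing α ⧸ I)))

/-- The quotient map from a Boolean algebra to its quotient algebra. -/
def quotCls {α : Type} [BooleanAlgebra α] (I : Ideal (AsBoolRing α)) (a : α) : quotAlg α I :=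
  toBoolAlg (Ideal.Quotient.mk I (toBoolRing a))

/-- The ideal of finite subsets of `ω`, as a ring ideal of `P(ω)`. -/
def finIdeal : Ideal (AsBoolRing (Set ℕ)) where
  carrier := {x | (ofBoolRing x : Set ℕ).Finite}
  zero_mem' := by simp [ofBoolRing_zero, Set.bot_eq_empty]
  add_mem' := by
    intro a b ha hb
    simpa [ofBoolRing_add] using ((ha.union hb).subset (Set.symmDiff_subset_union))
  smul_mem' := by
    intro c x hx
    simpa [smul_eq_mul, ofBoolRing_mul] using hx.subset (by simp [Set.inf_eq_inter])

/-- `P(ω)/fin`. -/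
def PomegaFin : Type := quotAlg (Set ℕ) finIdeal

noncomputable instance : BooleanAlgebra PomegaFin := quotAlgBA _ _

/-- The ideal `Fin` of the product algebra `ωB`: functions with finite support. -/
def finSuppIdeal (B : Type) [BooleanAlgebra B] : Ideal (AsBoolRing (ℕ → B)) where
  carrier := {x | {n | (ofBoolRing x : ℕ → B) n ≠ ⊥}.Finite}
  zero_mem' := by simp [ofBoolRing_zero]
  add_mem' := by
    intro a b ha hb
    refine ((ha.union hb).subset ?_)
    intro n hn
    simp only [ofBoolRing_add, Pi.symmDiff_apply, Set.mem_setOf_eq] at hn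
    by_contra h
    try push_neg at h
    simp only [Set.mem_union, Set.mem_setOf_eq] at h
    push_neg at h
    simp [h.1, h.2] at hn
  smul_mem' := by
    intro c x hx
    refine hx.subset ?_
    intro n hn
    simp only [smul_eq_mul, ofBoolRing_mul, Pi.inf_apply, Set.mem_setOf_eq] at hn
    simp only [Set.mem_setOf_eq]
    intro h
    simp [h] at hn

/-- The reduced power `ωB/Fin` of a Boolean algebra `B`. -/
def redPow (B : Type) [BooleanAlgebra B] : Type := quotAlg (ℕ → B) (finSuppIdeal B)

noncomputable instance (B : Type) [BooleanAlgebra B] : BooleanAlgebra (redPow B) := quotAlgBA _ _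
/-- The reaping relational system of a Boolean algebra. -/
def reapSys (α : Type) [BooleanAlgebra α] : RelSys :=
  ⟨α, {r : α // r ≠ ⊥}, fun b r => r.1 ≤ b ∨ r.1 ⊓ b = ⊥⟩

/-- An ultrafilter on a Boolean algebra. -/
def IsBAUltrafilter {α : Type} [BooleanAlgebra α] (U : Set α) : Prop :=
  ⊥ ∉ U ∧ (∀ a ∈ U, ∀ b ∈ U, a ⊓ b ∈ U) ∧ (∀ a ∈ U, ∀ b, a ≤ b → b ∈ U) ∧
    ∀ a : α, a ∈ U ∨ aᶜ ∈ U

/-- A principal ultrafilter: one generated by a single element. -/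
def IsPrincipal {α : Type} [BooleanAlgebra α] (U : Set α) : Prop :=
  ∃ a : α, U = {b | a ≤ b}

/-- The ultrafilter number of a Boolean algebra: the least cofinality of `(U, ≥)`
over non-principal ultrafilters `U`. -/
noncomputable def uNum (α : Type) [BooleanAlgebra α] : Cardinal :=
  sInf { c | ∃ U : Set α, IsBAUltrafilter U ∧ ¬ IsPrincipal U ∧
    ∃ D : Set α, D ⊆ U ∧ (∀ u ∈ U, ∃ d ∈ D, d ≤ u) ∧ Cardinal.mk D = c }

section QuotLemmas

variable {α : Type} [BooleanAlgebra α] (I : Ideal (AsBoolRing α))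

theorem quotCls_surjective : Function.Surjective (quotCls I) := by
  intro q
  obtain ⟨z, hz⟩ := Ideal.Quotient.mk_surjective (ofBoolAlg q)
  refine ⟨ofBoolRing z, ?_⟩
  simp only [quotCls, toBoolRing_ofBoolRing, hz, toBoolAlg_ofBoolAlg]
  exact toBoolAlg_ofBoolAlg q

theorem quotCls_bot : quotCls I ⊥ = ⊥ := by
  simp only [quotCls, toBoolRing_bot, map_zero, toBoolAlg_zero]
  exact toBoolAlg_zero (α := AsBoolRing α ⧸ I)

theorem quotCls_top : quotCls I ⊤ = ⊤ := by
  simp only [quotCls, toBoolRing_top, map_one, toBoolAlg_one]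
  exact toBoolAlg_one (α := AsBoolRing α ⧸ I)

theorem quotCls_inf (a b : α) : quotCls I (a ⊓ b) = quotCls I a ⊓ quotCls I b := by
  simp only [quotCls, toBoolRing_inf, map_mul, toBoolAlg_mul]
  exact toBoolAlg_mul _ _

theorem toBoolRing_compl (a : α) : toBoolRing aᶜ = 1 + toBoolRing a := by
  rw [show aᶜ = symmDiff ⊤ a by simp, toBoolRing_symmDiff, toBoolRing_top]

theorem toBoolAlg_one_add {R : Type} [BooleanRing R] (z : R) :
    toBoolAlg (1 + z) = (toBoolAlg z)ᶜ := by
  refine ofBoolAlg_inj.mp ?_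
  rw [ofBoolAlg_compl, ofBoolAlg_toBoolAlg, ofBoolAlg_toBoolAlg]

theorem quotCls_compl (a : α) : quotCls I aᶜ = (quotCls I a)ᶜ := by
  simp only [quotCls, toBoolRing_compl, map_add, map_one]
  exact toBoolAlg_one_add (R := AsBoolRing α ⧸ I) _

theorem quotCls_sdiff (a b : α) : quotCls I (a \ b) = quotCls I a \ quotCls I b := by
  rw [sdiff_eq, quotCls_inf, quotCls_compl, ← sdiff_eq]

theorem quotCls_eq_bot_iff (a : α) : quotCls I a = ⊥ ↔ toBoolRing a ∈ I := by
  show toBoolAlg (Ideal.Quotient.mk I (toBoolRing a)) = toBoolAlg (0 : AsBoolRing α ⧸ I) ↔ _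
  rw [toBoolAlg_inj, Ideal.Quotient.eq_zero_iff_mem]

theorem quotCls_le_iff (a b : α) :
    quotCls I a ≤ quotCls I b ↔ toBoolRing (a \ b) ∈ I := by
  rw [← quotCls_eq_bot_iff, quotCls_sdiff, sdiff_eq_bot_iff]

theorem quotCls_disj_iff (a b : α) :
    quotCls I a ⊓ quotCls I b = ⊥ ↔ toBoolRing (a ⊓ b) ∈ I := by
  rw [← quotCls_inf, quotCls_eq_bot_iff]

end QuotLemmas
section Specialize

/-- the canonical class map onto `P(ω)/fin` -/
noncomputable def pF (U : Set ℕ) : PomegaFin := quotCls finIdeal U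

theorem mem_finIdeal_iff (U : Set ℕ) : toBoolRing U ∈ finIdeal ↔ U.Finite := by
  constructor
  · intro h
    exact h
  · intro h
    show (ofBoolRing (toBoolRing U) : Set ℕ).Finite
    simpa [ofBoolRing_toBoolRing] using h

theorem pF_surjective : Function.Surjective pF := quotCls_surjective _

theorem pF_eq_bot_iff (U : Set ℕ) : pF U = ⊥ ↔ U.Finite := by
  exact (quotCls_eq_bot_iff finIdeal U).trans (mem_finIdeal_iff U)

theorem pF_le_iff (U V : Set ℕ) : pF U ≤ pF V ↔ (U \ V).Finite := by
  exact (quotCls_le_iff finIdeal U V).trans (mem_finIdeal_iff _)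

theorem pF_disj_iff (U V : Set ℕ) : pF U ⊓ pF V = ⊥ ↔ (U ∩ V).Finite := by
  exact (quotCls_disj_iff finIdeal U V).trans (mem_finIdeal_iff _)

theorem pF_top_ne_bot : (⊤ : PomegaFin) ≠ ⊥ := by
  have h : pF Set.univ = ⊤ := quotCls_top _
  rw [← h]
  rw [Ne, pF_eq_bot_iff]
  simpa using Set.infinite_univ

variable {B : Type} [BooleanAlgebra B]

/-- the canonical class map onto `ωB/Fin` -/
noncomputable def rP (g : ℕ → B) : redPow B := quotCls (finSuppIdeal B) g

theorem mem_finSuppIdeal_iff (g : ℕ → B) :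
    toBoolRing g ∈ finSuppIdeal B ↔ {n | g n ≠ ⊥}.Finite := by
  constructor
  · intro h
    exact h
  · intro h
    show {n | (ofBoolRing (toBoolRing g) : ℕ → B) n ≠ ⊥}.Finite
    simpa [ofBoolRing_toBoolRing] using h

theorem rP_surjective : Function.Surjective (rP (B := B)) := quotCls_surjective _

theorem rP_eq_bot_iff (g : ℕ → B) : rP g = ⊥ ↔ {n | g n ≠ ⊥}.Finite := by
  exact (quotCls_eq_bot_iff (finSuppIdeal B) g).trans (mem_finSuppIdeal_iff g)

theorem rP_le_iff (g h : ℕ → B) : rP g ≤ rP h ↔ {n | g n \ h n ≠ ⊥}.Finite := by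
  exact (quotCls_le_iff (finSuppIdeal B) g h).trans (mem_finSuppIdeal_iff _)

theorem rP_disj_iff (g h : ℕ → B) : rP g ⊓ rP h = ⊥ ↔ {n | g n ⊓ h n ≠ ⊥}.Finite := by
  exact (quotCls_disj_iff (finSuppIdeal B) g h).trans (mem_finSuppIdeal_iff _)

theorem rP_top_ne_bot [Nontrivial B] : (⊤ : redPow B) ≠ ⊥ := by
  have h : rP (⊤ : ℕ → B) = ⊤ := quotCls_top _
  rw [← h, Ne, rP_eq_bot_iff]
  intro hfin
  have : {n : ℕ | (⊤ : ℕ → B) n ≠ ⊥} = Set.univ := by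
    ext n; simp [Pi.top_apply, top_ne_bot]
  rw [this] at hfin
  exact Set.infinite_univ hfin

end Specialize
section RelSysLemmas

theorem dNum_le_of_dominating {S : RelSys} {Y : Set S.Cod}
    (h : ∀ x, ∃ y ∈ Y, S.Rel x y) : dNum S ≤ Cardinal.mk Y :=
  csInf_le' ⟨Y, rfl, h⟩

theorem exists_optimal_dominating {S : RelSys}
    (hne : ∃ Y : Set S.Cod, ∀ x, ∃ y ∈ Y, S.Rel x y) :
    ∃ Y : Set S.Cod, Cardinal.mk Y = dNum S ∧ ∀ x, ∃ y ∈ Y, S.Rel x y := by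
  obtain ⟨Y₀, hY₀⟩ := hne
  have hne' : { c | ∃ Y : Set S.Cod, Cardinal.mk Y = c ∧ ∀ x : S.Dom, ∃ y ∈ Y, S.Rel x y }.Nonempty :=
    ⟨Cardinal.mk Y₀, Y₀, rfl, hY₀⟩
  obtain ⟨Y, hmk, hdom⟩ := csInf_mem hne'
  exact ⟨Y, hmk, hdom⟩

theorem bNum_le_of_unbounded {S : RelSys} {X : Set S.Dom}
    (h : ∀ y, ∃ x ∈ X, ¬ S.Rel x y) : bNum S ≤ Cardinal.mk X :=
  csInf_le' ⟨X, rfl, h⟩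

theorem exists_optimal_unbounded {S : RelSys}
    (hne : ∃ X : Set S.Dom, ∀ y, ∃ x ∈ X, ¬ S.Rel x y) :
    ∃ X : Set S.Dom, Cardinal.mk X = bNum S ∧ ∀ y, ∃ x ∈ X, ¬ S.Rel x y := by
  obtain ⟨X₀, hX₀⟩ := hne
  have hne' : { c | ∃ X : Set S.Dom, Cardinal.mk X = c ∧ ∀ y : S.Cod, ∃ x ∈ X, ¬ S.Rel x y }.Nonempty :=
    ⟨Cardinal.mk X₀, X₀, rfl, hX₀⟩
  obtain ⟨X, hmk, hunb⟩ := csInf_mem hne'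
  exact ⟨X, hmk, hunb⟩

theorem GT_dNum_le {S T : RelSys} (hGT : GT S T)
    (hne : ∃ Y : Set T.Cod, ∀ x, ∃ y ∈ Y, T.Rel x y) :
    dNum S ≤ dNum T := by
  obtain ⟨φm, φp, hφ⟩ := hGT
  obtain ⟨Y, hmk, hdom⟩ := exists_optimal_dominating hne
  have hdom' : ∀ x, ∃ y ∈ φp '' Y, S.Rel x y := by
    intro x
    obtain ⟨y, hy, hr⟩ := hdom (φm x)
    exact ⟨φp y, Set.mem_image_of_mem _ hy, hφ x y hr⟩
  calc dNum S ≤ Cardinal.mk (φp '' Y) := dNum_le_of_dominating hdom'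
    _ ≤ Cardinal.mk Y := Cardinal.mk_image_le
    _ = dNum T := hmk

theorem GT_bNum_le {S T : RelSys} (hGT : GT S T)
    (hne : ∃ X : Set S.Dom, ∀ y, ∃ x ∈ X, ¬ S.Rel x y) :
    bNum T ≤ bNum S := by
  obtain ⟨φm, φp, hφ⟩ := hGT
  obtain ⟨X, hmk, hunb⟩ := exists_optimal_unbounded hne
  have hunb' : ∀ y, ∃ x ∈ φm '' X, ¬ T.Rel x y := by
    intro y
    obtain ⟨x, hx, hnr⟩ := hunb (φp y)
    exact ⟨φm x, Set.mem_image_of_mem _ hx, fun hr => hnr (hφ x y hr)⟩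
  calc bNum T ≤ Cardinal.mk (φm '' X) := bNum_le_of_unbounded hunb'
    _ ≤ Cardinal.mk X := Cardinal.mk_image_le
    _ = bNum S := hmk

theorem dNum_seqComp_le {S T : RelSys}
    (hS : ∃ Y : Set S.Cod, ∀ x, ∃ y ∈ Y, S.Rel x y)
    (hT : ∃ Y : Set T.Cod, ∀ x, ∃ y ∈ Y, T.Rel x y) :
    dNum (seqComp S T) ≤ dNum S * dNum T := by
  obtain ⟨YS, hmkS, hdomS⟩ := exists_optimal_dominating hS
  obtain ⟨YT, hmkT, hdomT⟩ := exists_optimal_dominating hT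
  have hdom : ∀ p : (seqComp S T).Dom, ∃ y ∈ (YS ×ˢ YT : Set (S.Cod × T.Cod)), (seqComp S T).Rel p y := by
    rintro ⟨a, f⟩
    obtain ⟨y₁, hy₁, hr₁⟩ := hdomS a
    obtain ⟨y₂, hy₂, hr₂⟩ := hdomT (f y₁)
    exact ⟨(y₁, y₂), Set.mem_prod.mpr ⟨hy₁, hy₂⟩, hr₁, hr₂⟩
  have hcard : Cardinal.mk ↥(YS ×ˢ YT : Set (S.Cod × T.Cod)) = Cardinal.mk YS * Cardinal.mk YT := by
    rw [Cardinal.mk_congr (Equiv.Set.prod YS YT)]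
    simpa using Cardinal.mk_prod
  calc dNum (seqComp S T) ≤ Cardinal.mk ↥(YS ×ˢ YT : Set (S.Cod × T.Cod)) :=
        dNum_le_of_dominating hdom
    _ = dNum S * dNum T := by rw [hcard, hmkS, hmkT]

theorem min_bNum_le_seqComp {S T : RelSys}
    (hne : ∃ X : Set (seqComp S T).Dom, ∀ y, ∃ x ∈ X, ¬ (seqComp S T).Rel x y) :
    min (bNum S) (bNum T) ≤ bNum (seqComp S T) := by
  obtain ⟨X, hmk, hunb⟩ := exists_optimal_unbounded hne
  by_cases hb : ∃ C : S.Cod, ∀ p ∈ X, S.Rel p.1 C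
  · obtain ⟨C₀, hC₀⟩ := hb
    have hunbT : ∀ r, ∃ x ∈ (fun p : (seqComp S T).Dom => p.2 C₀) '' X, ¬ T.Rel x r := by
      intro r
      obtain ⟨p, hp, hnr⟩ := hunb (C₀, r)
      refine ⟨p.2 C₀, Set.mem_image_of_mem _ hp, fun hr => hnr ⟨hC₀ p hp, hr⟩⟩
    calc min (bNum S) (bNum T) ≤ bNum T := min_le_right _ _
      _ ≤ Cardinal.mk ((fun p : (seqComp S T).Dom => p.2 C₀) '' X) := bNum_le_of_unbounded hunbT
      _ ≤ Cardinal.mk X := Cardinal.mk_image_le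
      _ = bNum (seqComp S T) := hmk
  · push_neg at hb
    have hunbS : ∀ C, ∃ x ∈ Prod.fst '' X, ¬ S.Rel x C := by
      intro C
      obtain ⟨p, hp, hnr⟩ := hb C
      exact ⟨p.1, Set.mem_image_of_mem _ hp, hnr⟩
    calc min (bNum S) (bNum T) ≤ bNum S := min_le_left _ _
      _ ≤ Cardinal.mk (Prod.fst '' X) := bNum_le_of_unbounded hunbS
      _ ≤ Cardinal.mk X := Cardinal.mk_image_le
      _ = bNum (seqComp S T) := hmk

end RelSysLemmas
section NonemptyHelpers

theorem infinite_split {S : Set ℕ} (hS : S.Infinite) :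
    ∃ A : Set ℕ, A ⊆ S ∧ A.Infinite ∧ (S \ A).Infinite := by
  classical
  let e := hS.natEmbedding
  refine ⟨Set.range (fun k => (e (2 * k) : ℕ)), ?_, ?_, ?_⟩
  · rintro n ⟨k, rfl⟩
    exact (e (2 * k)).2
  · apply Set.infinite_range_of_injective
    intro i j hij
    have := e.injective (Subtype.ext hij)
    omega
  · apply Set.Infinite.mono (s := Set.range (fun k => (e (2 * k + 1) : ℕ)))
    · rintro n ⟨k, rfl⟩
      refine ⟨(e (2 * k + 1)).2, ?_⟩
      rintro ⟨j, hj⟩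
      have := e.injective (Subtype.ext hj)
      omega
    · apply Set.infinite_range_of_injective
      intro i j hij
      have := e.injective (Subtype.ext hij)
      omega

noncomputable def pRep (r : PomegaFin) : Set ℕ := (pF_surjective r).choose

theorem pRep_spec (r : PomegaFin) : pF (pRep r) = r := (pF_surjective r).choose_spec

theorem pRep_infinite {r : PomegaFin} (hr : r ≠ ⊥) : (pRep r).Infinite := by
  intro hfin
  exact hr (by rw [← pRep_spec r, pF_eq_bot_iff]; exact hfin)

variable {B : Type} [BooleanAlgebra B]

noncomputable def rRep (x : redPow B) : ℕ → B := (rP_surjective x).choose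

theorem rRep_spec (x : redPow B) : rP (rRep x) = x := (rP_surjective x).choose_spec

theorem maxAC_top [Nontrivial B] : MaxAC ({⊤} : Set B) := by
  refine ⟨⟨?_, ?_⟩, ?_⟩
  · rintro a rfl
    · exact top_ne_bot
  · rintro a rfl b rfl h
    exact absurd rfl h
  · intro b hb
    exact ⟨⊤, rfl, by simpa using hb⟩

/-- the trivial partition -/
noncomputable def topPart (B : Type) [BooleanAlgebra B] [Nontrivial B] : PartT B :=
  ⟨{⊤}, maxAC_top⟩

theorem almostRefines_refl (A : Set B) : AlmostRefines A A := by
  refine ⟨∅, by simp, fun c hc => ⟨c, Or.inl ⟨hc, by simp⟩, le_rfl⟩⟩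

/-- a nonzero element of `P(ω)/fin` below a given nonzero one, splitting it -/
theorem exists_splitter {r : PomegaFin} (hr : r ≠ ⊥) :
    ∃ v : PomegaFin, ¬ (r ≤ v) ∧ r ⊓ v ≠ ⊥ := by
  obtain ⟨R, rfl⟩ := pF_surjective r
  have hR : R.Infinite := fun hfin => hr ((pF_eq_bot_iff R).mpr hfin)
  obtain ⟨A, hAsub, hAinf, hdinf⟩ := infinite_split hR
  refine ⟨pF A, ?_, ?_⟩
  · rw [pF_le_iff]
    exact fun hfin => hdinf hfin
  · intro heq
    rw [pF_disj_iff] at heq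
    exact hAinf (heq.subset (fun n hn => ⟨hAsub hn, hn⟩))

theorem reap_dom_nonempty (α : Type) [BooleanAlgebra α] (hα : (⊤ : α) ≠ ⊥) :
    ∃ Y : Set (reapSys α).Cod, ∀ f, ∃ r ∈ Y, (reapSys α).Rel f r := by
  classical
  refine ⟨Set.univ, fun f => ?_⟩
  by_cases h : f = (⊥ : α)
  · exact ⟨(⟨⊤, hα⟩ : {r : α // r ≠ ⊥}), Set.mem_univ _, Or.inr (by rw [h, inf_bot_eq])⟩
  · exact ⟨(⟨f, h⟩ : {r : α // r ≠ ⊥}), Set.mem_univ _, Or.inl le_rfl⟩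

theorem partStar_dom_nonempty (B : Type) [BooleanAlgebra B] :
    ∃ Y : Set (PartStar B).Cod, ∀ A, ∃ C ∈ Y, (PartStar B).Rel A C :=
  ⟨Set.univ, fun A => ⟨A, Set.mem_univ _, almostRefines_refl A.1⟩⟩

theorem seq_dom_nonempty (B : Type) [BooleanAlgebra B] :
    ∃ Y : Set (seqComp (PartStar B) (reapSys PomegaFin)).Cod,
      ∀ p, ∃ y ∈ Y, (seqComp (PartStar B) (reapSys PomegaFin)).Rel p y := by
  classical
  refine ⟨Set.univ, ?_⟩
  rintro ⟨A, f⟩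
  by_cases h : f A = (⊥ : PomegaFin)
  · exact ⟨(A, (⟨⊤, pF_top_ne_bot⟩ : {r : PomegaFin // r ≠ ⊥})), Set.mem_univ _,
      almostRefines_refl A.1, Or.inr (by show (⊤ : PomegaFin) ⊓ f A = ⊥; rw [h, inf_bot_eq])⟩
  · refine ⟨(A, (⟨f A, h⟩ : {r : PomegaFin // r ≠ ⊥})), Set.mem_univ _,
      almostRefines_refl A.1, Or.inl ?_⟩
    exact le_rfl

theorem seq_unb_nonempty (B : Type) [BooleanAlgebra B] [Nontrivial B] :
    ∃ X : Set (seqComp (PartStar B) (reapSys PomegaFin)).Dom,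
      ∀ y, ∃ x ∈ X, ¬ (seqComp (PartStar B) (reapSys PomegaFin)).Rel x y := by
  classical
  refine ⟨Set.univ, ?_⟩
  rintro ⟨C, r⟩
  obtain ⟨v, hv1, hv2⟩ := exists_splitter r.2
  refine ⟨(topPart B, fun _ => v), Set.mem_univ _, ?_⟩
  rintro ⟨-, hre⟩
  rcases hre with h | h
  · exact hv1 h
  · exact hv2 h

theorem redPow_unb_nonempty (B : Type) [BooleanAlgebra B] :
    ∃ X : Set (reapSys (redPow B)).Dom,
      ∀ y, ∃ x ∈ X, ¬ (reapSys (redPow B)).Rel x y := by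
  classical
  refine ⟨Set.univ, ?_⟩
  rintro ⟨r, hr⟩
  obtain ⟨g, rfl⟩ : ∃ g, rP g = r := rP_surjective r
  have hsupp : {n | g n ≠ ⊥}.Infinite := by
    intro hfin
    exact hr ((rP_eq_bot_iff g).mpr hfin)
  obtain ⟨A, hAsub, hAinf, hdinf⟩ := infinite_split hsupp
  refine ⟨rP (fun n => if n ∈ A then g n else ⊥), Set.mem_univ _, ?_⟩
  rintro (h | h)
  · rw [rP_le_iff] at h
    apply hdinf
    apply h.subset
    rintro n ⟨hn1, hn2⟩
    simp only [Set.mem_setOf_eq, hn2, if_neg]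
    simpa using hn1
  · rw [rP_disj_iff] at h
    apply hAinf
    apply h.subset
    intro n hn
    have hn' : n ∈ {m | g m ≠ ⊥} := hAsub hn
    simp only [Set.mem_setOf_eq, hn, if_pos, inf_idem]
    exact hn'

end NonemptyHelpers
section AtomCase

variable {B : Type} [BooleanAlgebra B]

theorem atom_le_or_disj {a : B} (ha : IsAtom a) (b : B) : a ≤ b ∨ a ⊓ b = ⊥ := by
  rcases eq_or_lt_of_le (inf_le_left : a ⊓ b ≤ a) with h | h
  · exact Or.inl (inf_eq_left.mp h)
  · exact Or.inr (ha.2 _ h)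

theorem gt_of_atom [Nontrivial B] {a0 : B} (ha : IsAtom a0) :
    GT (reapSys (redPow B)) (seqComp (PartStar B) (reapSys PomegaFin)) := by
  classical
  refine ⟨fun x => ((topPart B : PartT B), fun _C => pF {n | a0 ≤ rRep x n}),
          fun p => ⟨rP (fun n => if n ∈ pRep p.2.1 then a0 else ⊥), ?_⟩, ?_⟩
  · rw [Ne, rP_eq_bot_iff]
    intro hfin
    apply pRep_infinite p.2.2
    apply hfin.subset
    intro n hn
    simp only [Set.mem_setOf_eq, hn, if_pos]
    exact ha.1
  · rintro x ⟨C, r⟩ ⟨-, hre⟩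
    set g := rRep x with hgdef
    have hgx : rP g = x := rRep_spec x
    set R := pRep r.1 with hRdef
    have hR : pF R = r.1 := pRep_spec r.1
    have hre' : (R \ {n | a0 ≤ g n}).Finite ∨ (R ∩ {n | a0 ≤ g n}).Finite := by
      rcases hre with h | h
      · left; rw [← hR, pF_le_iff] at h; exact h
      · right; rw [← hR, pF_disj_iff] at h; exact h
    have hrel : rP (fun n => if n ∈ R then a0 else ⊥) ≤ x ∨
        rP (fun n => if n ∈ R then a0 else ⊥) ⊓ x = ⊥ := by
      rcases hre' with h | h
      · left
        rw [← hgx, rP_le_iff]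
        apply h.subset
        intro n hn
        simp only [Set.mem_setOf_eq] at hn
        by_cases hnR : n ∈ R
        · simp only [hnR, if_pos] at hn
          refine ⟨hnR, ?_⟩
          intro hmem
          rw [Set.mem_setOf_eq] at hmem
          exact hn (by rw [sdiff_eq_bot_iff]; exact hmem)
        · simp [hnR] at hn
      · right
        rw [← hgx, rP_disj_iff]
        apply h.subset
        intro n hn
        simp only [Set.mem_setOf_eq] at hn
        by_cases hnR : n ∈ R
        · simp only [hnR, if_pos] at hn
          refine ⟨hnR, ?_⟩
          rcases atom_le_or_disj ha (g n) with h1 | h1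
          · exact h1
          · exact absurd h1 hn
        · simp [hnR] at hn
    exact hrel

end AtomCase
section Skeleton

variable {B : Type} [BooleanAlgebra B]

theorem exists_maxAC_ext {D : Set B} (hD : BAAntichain D) : ∃ M, MaxAC M ∧ D ⊆ M := by
  classical
  obtain ⟨M, hDM, hmax⟩ := zorn_subset_nonempty {A : Set B | BAAntichain A ∧ D ⊆ A}
    (fun c hc hchain hne => by
      refine ⟨⋃₀ c, ⟨⟨?_, ?_⟩, ?_⟩, fun s hs => Set.subset_sUnion_of_mem hs⟩
      · rintro a ⟨A, hA, haA⟩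
        exact (hc hA).1.1 a haA
      · rintro a ⟨A, hA, haA⟩ b ⟨A', hA', hbA'⟩ hab
        rcases hchain.total hA hA' with h | h
        · exact (hc hA').1.2 a (h haA) b hbA' hab
        · exact (hc hA).1.2 a haA b (h hbA') hab
      · obtain ⟨A, hA⟩ := hne
        exact (hc hA).2.trans (Set.subset_sUnion_of_mem hA)) D ⟨hD, subset_rfl⟩
  refine ⟨M, ⟨hmax.prop.1, ?_⟩, hmax.prop.2⟩
  intro b hb
  by_contra hcon
  push_neg at hcon
  have hbM : b ∉ M := fun hmem => hb (by simpa using hcon b hmem)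
  have hbig : M ∪ {b} ∈ {A : Set B | BAAntichain A ∧ D ⊆ A} := by
    refine ⟨⟨?_, ?_⟩, hmax.prop.2.trans Set.subset_union_left⟩
    · rintro a (ha | rfl)
      · exact hmax.prop.1.1 a ha
      · exact hb
    · rintro a (ha | rfl) c (hc | rfl) hac
      · exact hmax.prop.1.2 a ha c hc hac
      · exact hcon a ha
      · rw [inf_comm]; exact hcon c hc
      · exact absurd rfl hac
  have := hmax.le_of_ge hbig Set.subset_union_left
  exact hbM (this (by simp))

theorem exists_skeleton [Nontrivial B] (hccc : CCC B) (hat : ∀ a : B, ¬ IsAtom a) :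
    ∃ m : ℕ → B, Function.Injective m ∧ MaxAC (Set.range m) := by
  classical
  have hsplit : ∀ u : B, u ≠ ⊥ → ∃ v, v ≠ ⊥ ∧ v < u := by
    intro u hu
    have h := hat u
    rw [IsAtom] at h
    push_neg at h
    obtain ⟨v, hv1, hv2⟩ := h hu
    exact ⟨v, hv2, hv1⟩
  -- a strictly shrinking sequence of nonzero elements with nonzero scraps
  let step : {b : B // b ≠ ⊥} → {b : B // b ≠ ⊥} := fun u =>
    ⟨u.1 \ (hsplit u.1 u.2).choose, by
      have hlt := (hsplit u.1 u.2).choose_spec.2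
      rw [Ne, sdiff_eq_bot_iff]
      exact fun hle => absurd (le_antisymm hlt.le hle) (ne_of_lt hlt)⟩
  let useq : ℕ → {b : B // b ≠ ⊥} := fun n => step^[n] ⟨⊤, top_ne_bot⟩
  let d : ℕ → B := fun n => (hsplit (useq n).1 (useq n).2).choose
  have hd_ne : ∀ n, d n ≠ ⊥ := fun n => (hsplit (useq n).1 (useq n).2).choose_spec.1
  have hd_le : ∀ n, d n ≤ (useq n).1 := fun n => (hsplit (useq n).1 (useq n).2).choose_spec.2.le
  have husucc : ∀ n, (useq (n+1)).1 = (useq n).1 \ d n := by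
    intro n
    show (step^[n+1] _).1 = _
    rw [Function.iterate_succ_apply']
  have hmono : ∀ k n, k < n → (useq n).1 ≤ (useq k).1 \ d k := by
    intro k n hkn
    induction n with
    | zero => omega
    | succ j ih =>
      rcases Nat.lt_succ_iff_lt_or_eq.mp hkn with h | h
      · refine le_trans ?_ (ih h)
        rw [husucc j]
        exact sdiff_le
      · subst h
        rw [husucc k]
  have hd_disj : ∀ k n, k ≠ n → d k ⊓ d n = ⊥ := by
    have key : ∀ k n, k < n → d k ⊓ d n = ⊥ := by
      intro k n hkn
      have h1 : d n ≤ (useq k).1 \ d k := le_trans (hd_le n) (hmono k n hkn)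
      have h2 : d k ⊓ d n ≤ d k ⊓ ((useq k).1 \ d k) := inf_le_inf_left _ h1
      have h3 : d k ⊓ ((useq k).1 \ d k) = ⊥ := by
        rw [inf_comm]
        exact disjoint_sdiff_self_left.eq_bot
      exact le_bot_iff.mp (h3 ▸ h2)
    intro k n hkn
    rcases lt_or_gt_of_ne hkn with h | h
    · exact key k n h
    · rw [inf_comm]; exact key n k h
  have hd_inj : Function.Injective d := by
    intro i j hij
    by_contra hne
    have := hd_disj i j hne
    rw [hij, inf_idem] at this
    exact hd_ne j this
  have hDanti : BAAntichain (Set.range d) := by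
    constructor
    · rintro a ⟨i, rfl⟩; exact hd_ne i
    · rintro a ⟨i, rfl⟩ b ⟨j, rfl⟩ hab
      exact hd_disj i j (fun h => hab (by rw [h]))
  obtain ⟨M, hM, hDM⟩ := exists_maxAC_ext hDanti
  have hMcnt : M.Countable := hccc M hM.1
  have hMinf : M.Infinite :=
    Set.Infinite.mono hDM (Set.infinite_range_of_injective hd_inj)
  have : Countable ↥M := hMcnt.to_subtype
  have : Infinite ↥M := hMinf.to_subtype
  obtain ⟨e⟩ : Nonempty (ℕ ≃ ↥M) := by
    obtain ⟨hden⟩ := nonempty_denumerable ↥M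
    exact ⟨(@Denumerable.eqv ↥M hden).symm⟩
  refine ⟨fun k => (e k : B), ?_, ?_⟩
  · intro i j hij
    exact e.injective (Subtype.ext hij)
  · have hrange : Set.range (fun k => (e k : B)) = M := by
      ext b
      constructor
      · rintro ⟨k, rfl⟩; exact (e k).2
      · intro hb
        exact ⟨e.symm ⟨b, hb⟩, by simp⟩
    rw [hrange]
    exact hM

end Skeleton
section PatternPartition

variable {B : Type} [BooleanAlgebra B]

/-- the `σ`-region of the finite subalgebra generated by `g 0, …, g k` -/
noncomputable def reg (g : ℕ → B) (k : ℕ) (σ : ℕ → Bool) : B :=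
  (Finset.range (k + 1)).inf (fun n => if σ n then g n else (g n)ᶜ)

theorem reg_le (g : ℕ → B) (k : ℕ) (σ : ℕ → Bool) {n : ℕ} (hn : n ≤ k) :
    reg g k σ ≤ if σ n then g n else (g n)ᶜ :=
  Finset.inf_le (Finset.mem_range.mpr (by omega))

theorem exists_reg (g : ℕ → B) (k : ℕ) {b : B} (hb : b ≠ ⊥) :
    ∃ σ : ℕ → Bool, b ⊓ reg g k σ ≠ ⊥ := by
  classical
  suffices h : ∀ j : ℕ, ∃ σ : ℕ → Bool,
      b ⊓ (Finset.range j).inf (fun n => if σ n then g n else (g n)ᶜ) ≠ ⊥ by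
    exact h (k + 1)
  intro j
  induction j with
  | zero => exact ⟨fun _ => true, by simpa using hb⟩
  | succ i ih =>
    obtain ⟨σ, hσ⟩ := ih
    have hsplit : b ⊓ (Finset.range i).inf (fun n => if σ n then g n else (g n)ᶜ) ⊓ g i ≠ ⊥ ∨
        b ⊓ (Finset.range i).inf (fun n => if σ n then g n else (g n)ᶜ) ⊓ (g i)ᶜ ≠ ⊥ := by
      by_contra hcon
      push_neg at hcon
      apply hσ
      have hdec : b ⊓ (Finset.range i).inf (fun n => if σ n then g n else (g n)ᶜ)
          = (b ⊓ (Finset.range i).inf (fun n => if σ n then g n else (g n)ᶜ) ⊓ g i)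
            ⊔ (b ⊓ (Finset.range i).inf (fun n => if σ n then g n else (g n)ᶜ) ⊓ (g i)ᶜ) := by
        rw [← inf_sup_left, sup_compl_eq_top, inf_top_eq]
      rw [hdec, hcon.1, hcon.2, sup_idem]
    have key : ∀ bit : Bool,
        b ⊓ (Finset.range i).inf (fun n => if σ n then g n else (g n)ᶜ)
            ⊓ (if bit then g i else (g i)ᶜ) ≠ ⊥ →
        ∃ σ' : ℕ → Bool,
          b ⊓ (Finset.range (i + 1)).inf (fun n => if σ' n then g n else (g n)ᶜ) ≠ ⊥ := by
      intro bit hbit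
      refine ⟨Function.update σ i bit, ?_⟩
      rw [Finset.range_add_one, Finset.inf_insert]
      have hcong : (Finset.range i).inf
            (fun n => if Function.update σ i bit n then g n else (g n)ᶜ)
          = (Finset.range i).inf (fun n => if σ n then g n else (g n)ᶜ) := by
        refine Finset.inf_congr rfl (fun n hn => ?_)
        rw [Function.update_of_ne (Nat.ne_of_lt (Finset.mem_range.mp hn))]
      rw [hcong, Function.update_self]
      intro hbot
      apply hbit
      rw [inf_assoc, inf_comm ((Finset.range i).inf (fun n => if σ n then g n else (g n)ᶜ))
        (if bit then g i else (g i)ᶜ)]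
      exact hbot
    rcases hsplit with h | h
    · exact key true (by simpa using h)
    · exact key false (by simpa using h)

/-- the partition associated to the sequence `g`, built on the skeleton `m` -/
noncomputable def patPart (m g : ℕ → B) : Set B :=
  {b | (∃ k σ, b = m k ⊓ reg g k σ) ∧ b ≠ ⊥}

theorem patPart_maxAC {m : ℕ → B} (hminj : Function.Injective m)
    (hM : MaxAC (Set.range m)) (g : ℕ → B) : MaxAC (patPart m g) := by
  classical
  refine ⟨⟨fun b hb => hb.2, ?_⟩, ?_⟩
  · rintro a ⟨⟨k, σ, rfl⟩, hane⟩ b ⟨⟨l, τ, rfl⟩, hbne⟩ hab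
    by_cases hkl : k = l
    · subst hkl
      by_cases hagree : ∀ n ∈ Finset.range (k + 1),
          (if σ n then g n else (g n)ᶜ) = (if τ n then g n else (g n)ᶜ)
      · exact absurd (by rw [reg, Finset.inf_congr rfl hagree, ← reg]) hab
      · push_neg at hagree
        obtain ⟨n, hn, hne'⟩ := hagree
        have hnk : n ≤ k := by
          have := Finset.mem_range.mp hn; omega
        have h1 : m k ⊓ reg g k σ ⊓ (m k ⊓ reg g k τ) ≤
            (if σ n then g n else (g n)ᶜ) ⊓ (if τ n then g n else (g n)ᶜ) :=
          inf_le_inf (le_trans inf_le_right (reg_le g k σ hnk))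
            (le_trans inf_le_right (reg_le g k τ hnk))
        have h2 : (if σ n then g n else (g n)ᶜ) ⊓ (if τ n then g n else (g n)ᶜ) = ⊥ := by
          cases hσn : σ n <;> cases hτn : τ n <;>
            simp only [hσn, hτn, if_true, if_false] at hne' ⊢
          · exact absurd rfl hne'
          · exact compl_inf_eq_bot
          · exact inf_compl_eq_bot
          · exact absurd rfl hne'
        exact le_bot_iff.mp (h2 ▸ h1)
    · have hmm : m k ⊓ m l = ⊥ :=
        hM.1.2 (m k) ⟨k, rfl⟩ (m l) ⟨l, rfl⟩ (fun h => hkl (hminj h))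
      have hle : m k ⊓ reg g k σ ⊓ (m l ⊓ reg g l τ) ≤ m k ⊓ m l :=
        inf_le_inf inf_le_left inf_le_left
      exact le_bot_iff.mp (hmm ▸ hle)
  · intro b hb
    obtain ⟨me, ⟨k, rfl⟩, hmb⟩ := hM.2 b hb
    obtain ⟨σ, hσ⟩ := exists_reg g k hmb
    have hac : m k ⊓ b ⊓ reg g k σ = m k ⊓ reg g k σ ⊓ b := by
      rw [inf_assoc, inf_comm b (reg g k σ), ← inf_assoc]
    refine ⟨m k ⊓ reg g k σ, ⟨⟨k, σ, rfl⟩, fun h => hσ (by rw [hac, h, bot_inf_eq])⟩,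
      fun h => hσ (by rw [hac]; exact h)⟩

end PatternPartition
section VFun

variable {B : Type} [BooleanAlgebra B]

open Classical in
/-- the canonical choice of an element of `C` below the `n`-th skeleton element -/
noncomputable def vfun (m : ℕ → B) (C : PartT B) (n : ℕ) : B :=
  if h : ∃ c ∈ C.1, c ≤ m n then h.choose else ⊥

theorem vfun_spec {m : ℕ → B} {C : PartT B} {n : ℕ} (h : ∃ c ∈ C.1, c ≤ m n) :
    vfun m C n ∈ C.1 ∧ vfun m C n ≤ m n := by
  classical
  rw [vfun, dif_pos h]
  exact ⟨h.choose_spec.1, h.choose_spec.2⟩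

theorem vfun_key {m g : ℕ → B} (hminj : Function.Injective m) (hM : MaxAC (Set.range m))
    {C : PartT B} {F : Finset B} (hFsub : ↑F ⊆ patPart m g)
    (href : Refines ((patPart m g \ ↑F) ∪ {F.sup id}) C.1) :
    ∃ K : Finset ℕ, ∀ n, n ∉ K →
      vfun m C n ∈ C.1 ∧ vfun m C n ≠ ⊥ ∧ (vfun m C n ≤ g n ∨ vfun m C n ≤ (g n)ᶜ) := by
  classical
  -- the skeleton indices occupied by `F`
  let kOf : B → ℕ := fun b => if h : ∃ k σ, b = m k ⊓ reg g k σ then h.choose else 0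
  have hkOf : ∀ b ∈ F, ∃ σ, b = m (kOf b) ⊓ reg g (kOf b) σ := by
    intro b hb
    have h : ∃ k σ, b = m k ⊓ reg g k σ := (hFsub hb).1
    show ∃ σ, b = m (if h' : ∃ k σ, b = m k ⊓ reg g k σ then h'.choose else 0)
      ⊓ reg g (if h' : ∃ k σ, b = m k ⊓ reg g k σ then h'.choose else 0) σ
    rw [dif_pos h]
    exact h.choose_spec
  set K : Finset ℕ := F.image kOf with hK
  have hsupK : F.sup id ≤ K.sup m := by
    refine Finset.sup_le (fun b hb => ?_)
    obtain ⟨σ, hbe⟩ := hkOf b hb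
    have h1 : b ≤ m (kOf b) := by
      conv_lhs => rw [hbe]
      exact inf_le_left
    exact le_trans h1 (Finset.le_sup (f := m) (Finset.mem_image_of_mem kOf hb))
  have hKdisj : ∀ n, n ∉ K → m n ⊓ K.sup m = ⊥ := by
    intro n hn
    rw [Finset.sup_inf_distrib_left]
    refine le_bot_iff.mp (Finset.sup_le (fun k hk => ?_))
    have hne : m n ≠ m k := fun h => hn (by rw [hminj h]; exact hk)
    exact le_of_eq (hM.1.2 (m n) ⟨n, rfl⟩ (m k) ⟨k, rfl⟩ hne)
  refine ⟨K, fun n hn => ?_⟩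
  have hmn_ne : m n ≠ ⊥ := hM.1.1 (m n) ⟨n, rfl⟩
  have hex : ∃ c ∈ C.1, c ≤ m n := by
    obtain ⟨c, hcC, hc⟩ := C.2.2 (m n) hmn_ne
    obtain ⟨a, ha, hca⟩ := href c hcC
    rcases ha with ⟨haP, -⟩ | ha
    · obtain ⟨⟨k, σ, hae⟩, -⟩ := haP
      have h1 : c ≤ m k := by rw [hae] at hca; exact le_trans hca inf_le_left
      have h2 : m k = m n := by
        by_contra hne
        have hd : m k ⊓ m n = ⊥ := hM.1.2 (m k) ⟨k, rfl⟩ (m n) ⟨n, rfl⟩ hne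
        exact hc (le_bot_iff.mp (hd ▸ inf_le_inf_right (m n) h1))
      exact ⟨c, hcC, h2 ▸ h1⟩
    · exfalso
      rw [Set.mem_singleton_iff] at ha
      subst ha
      have h1 : c ⊓ m n ≤ K.sup m ⊓ m n := inf_le_inf_right (m n) (le_trans hca hsupK)
      rw [inf_comm (K.sup m) (m n)] at h1
      exact hc (le_bot_iff.mp ((hKdisj n hn) ▸ h1))
  obtain ⟨hvC, hvm⟩ := vfun_spec hex
  have hvne : vfun m C n ≠ ⊥ := C.2.1.1 _ hvC
  refine ⟨hvC, hvne, ?_⟩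
  obtain ⟨a, ha, hva⟩ := href _ hvC
  rcases ha with ⟨haP, -⟩ | ha
  · obtain ⟨⟨k, σ, hae⟩, -⟩ := haP
    have h1 : vfun m C n ≤ m k := by rw [hae] at hva; exact le_trans hva inf_le_left
    have h2 : m k = m n := by
      by_contra hne
      have hd : m k ⊓ m n = ⊥ := hM.1.2 (m k) ⟨k, rfl⟩ (m n) ⟨n, rfl⟩ hne
      exact hvne (le_bot_iff.mp (hd ▸ le_inf h1 hvm))
    have hkn : k = n := hminj h2
    subst hkn
    have h3 : vfun m C k ≤ if σ k then g k else (g k)ᶜ := by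
      rw [hae] at hva
      exact le_trans (le_trans hva inf_le_right) (reg_le g k σ le_rfl)
    cases hσ : σ k
    · right; rw [hσ] at h3; simpa using h3
    · left; rw [hσ] at h3; simpa using h3
  · exfalso
    rw [Set.mem_singleton_iff] at ha
    subst ha
    have h1 : vfun m C n ≤ K.sup m ⊓ m n := le_inf (le_trans hva hsupK) hvm
    rw [inf_comm (K.sup m) (m n)] at h1
    exact hvne (le_bot_iff.mp ((hKdisj n hn) ▸ h1))

end VFun
section MainGT

variable {B : Type} [BooleanAlgebra B]

open Classical in
/-- the candidate reaper of `ωB/Fin` computed from a partition and a subset of `ω` -/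
noncomputable def sfn (m : ℕ → B) (p : PartT B × {r : PomegaFin // r ≠ ⊥}) : ℕ → B :=
  fun n => if n ∈ pRep p.2.1 then vfun m p.1 n else ⊥

open Classical in
noncomputable def phip [Nontrivial B] (m : ℕ → B)
    (p : PartT B × {r : PomegaFin // r ≠ ⊥}) : {s : redPow B // s ≠ ⊥} :=
  if hs : rP (sfn m p) = ⊥ then ⟨⊤, rP_top_ne_bot⟩ else ⟨rP (sfn m p), hs⟩

theorem phip_val [Nontrivial B] (m : ℕ → B) (p : PartT B × {r : PomegaFin // r ≠ ⊥})
    (h : rP (sfn m p) ≠ ⊥) : (phip m p).1 = rP (sfn m p) := by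
  classical
  rw [phip, dif_neg h]

theorem gt_of_atomless [Nontrivial B] (hccc : CCC B) (hat : ∀ a : B, ¬ IsAtom a) :
    GT (reapSys (redPow B)) (seqComp (PartStar B) (reapSys PomegaFin)) := by
  classical
  obtain ⟨m, hminj, hM⟩ := exists_skeleton hccc hat
  refine ⟨fun x => ((⟨patPart m (rRep x), patPart_maxAC hminj hM (rRep x)⟩ : PartT B),
      fun C => pF {n | vfun m C n ≤ rRep x n}), phip m, ?_⟩
  rintro x ⟨C, r⟩ ⟨href, hre⟩
  obtain ⟨F, hFsub, hrefines⟩ := href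
  obtain ⟨K, hK⟩ := vfun_key hminj hM hFsub hrefines
  have hgx : rP (rRep x) = x := rRep_spec x
  have hR : pF (pRep r.1) = r.1 := pRep_spec r.1
  have hRinf : (pRep r.1).Infinite := pRep_infinite r.2
  have hsfval : ∀ n, sfn m (C, r) n = if n ∈ pRep r.1 then vfun m C n else ⊥ := fun n => rfl
  -- the reaper is nonzero
  have hsne : rP (sfn m (C, r)) ≠ ⊥ := by
    rw [Ne, rP_eq_bot_iff]
    intro hfin
    refine (hRinf.diff K.finite_toSet) (hfin.subset ?_)
    rintro n ⟨hnR, hnK⟩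
    rw [Set.mem_setOf_eq, hsfval n, if_pos hnR]
    exact (hK n hnK).2.1
  have hval : (phip m (C, r)).1 = rP (sfn m (C, r)) := phip_val m (C, r) hsne
  show (phip m (C, r)).1 ≤ x ∨ (phip m (C, r)).1 ⊓ x = ⊥
  rw [hval]
  rcases hre with hle | hdisj
  · -- case `r ⊆* f`: the reaper is below `x`
    left
    rw [← hR, pF_le_iff] at hle
    rw [← hgx, rP_le_iff]
    refine hle.subset ?_
    intro n hn
    rw [Set.mem_setOf_eq, hsfval n] at hn
    by_cases hnR : n ∈ pRep r.1
    · rw [if_pos hnR] at hn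
      refine ⟨hnR, fun hmem => ?_⟩
      rw [Set.mem_setOf_eq] at hmem
      exact hn (by rw [sdiff_eq_bot_iff]; exact hmem)
    · rw [if_neg hnR] at hn
      exact absurd (by simp) hn
  · -- case `r ∩ f =* 0`: the reaper is disjoint from `x`
    right
    rw [← hR, pF_disj_iff] at hdisj
    rw [← hgx, rP_disj_iff]
    have hsub : {n | sfn m (C, r) n ⊓ rRep x n ≠ ⊥} ⊆
        (pRep r.1 ∩ {n | vfun m C n ≤ rRep x n}) ∪ ↑K := by
      intro n hn
      rw [Set.mem_setOf_eq, hsfval n] at hn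
      by_cases hnR : n ∈ pRep r.1
      · rw [if_pos hnR] at hn
        by_cases hnK : n ∈ K
        · exact Or.inr hnK
        · rcases (hK n hnK).2.2 with hpos | hneg
          · exact Or.inl ⟨hnR, hpos⟩
          · exfalso
            apply hn
            have : vfun m C n ⊓ rRep x n ≤ (rRep x n)ᶜ ⊓ rRep x n :=
              inf_le_inf_right _ hneg
            rw [compl_inf_eq_bot] at this
            exact le_bot_iff.mp this
      · rw [if_neg hnR] at hn
        exact absurd (by simp) hn
    exact (hdisj.union K.finite_toSet).subset hsub

theorem mainGT (B : Type) [BooleanAlgebra B] [Nontrivial B] (hccc : CCC B) :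
    GT (reapSys (redPow B)) (seqComp (PartStar B) (reapSys PomegaFin)) := by
  by_cases hat : ∃ a : B, IsAtom a
  · obtain ⟨a0, ha⟩ := hat
    exact gt_of_atom ha
  · push_neg at hat
    exact gt_of_atomless hccc hat

end MainGT
/-- For c.c.c. `B`, `R(ωB/Fin) ≤_T Part*(B) ; R(P(ω)/fin)`; consequently
`𝔯(ωB/Fin) ≤ 𝔡(Part*(B))·𝔯` and `min{𝔟(Part*(B)), 𝔰} ≤ 𝔰(ωB/Fin)`. -/
theorem stmt16 (B : Type) [BooleanAlgebra B] [Nontrivial B] (hccc : CCC B) :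
    GT (reapSys (redPow B)) (seqComp (PartStar B) (reapSys PomegaFin)) ∧
      dNum (reapSys (redPow B)) ≤ dNum (PartStar B) * dNum (reapSys PomegaFin) ∧
      min (bNum (PartStar B)) (bNum (reapSys PomegaFin)) ≤ bNum (reapSys (redPow B)) := by
  have hGT := mainGT B hccc
  refine ⟨hGT, ?_, ?_⟩
  · exact le_trans (GT_dNum_le hGT (seq_dom_nonempty B))
      (dNum_seqComp_le (partStar_dom_nonempty B) (reap_dom_nonempty PomegaFin pF_top_ne_bot))
  · exact le_trans (min_bNum_le_seqComp (seq_unb_nonempty B))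
      (GT_bNum_le hGT (redPow_unb_nonempty B))
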